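/- Let f, g : ℝ² → ℍ be integrable, and suppose g is the partial derivative of f with respect to the first variable s in the L¹ norm, i.e. lim_{h→0} ∫_{ℝ²} |(f(s+h,t) − f(s,t))/h − g(s,t)| ds dt = 0. Then the two-sided quaternion Fourier transforms satisfy 𝓖_T(u,v) = i u 𝓕_T(u,v) for all (u,v) ∈ ℝ². -/

import Mathlib

open MeasureTheory Filter Real Set
open scoped Quaternion Topology

noncomputable section

def qi : ℍ[ℝ] := ⟨0,1,0,0⟩
def qj : ℍ[ℝ] := ⟨0,0,1,0⟩

/-- `e^{μθ} = cos θ + μ sin θ` for a (pure unit) quaternion `μ`. -/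
def qexp (μ : ℍ[ℝ]) (θ : ℝ) : ℍ[ℝ] := (Real.cos θ : ℍ[ℝ]) + Real.sin θ • μ

/-- Two-sided quaternion Fourier transform. -/
def QFT_T (f : ℝ × ℝ → ℍ[ℝ]) (u v : ℝ) : ℍ[ℝ] :=
  ∫ p : ℝ × ℝ, qexp qi (-(u * p.1)) * f p * qexp qj (-(v * p.2))


set_option linter.unnecessarySeqFocus false

lemma integral_shift (F : ℝ × ℝ → ℍ[ℝ]) (h : ℝ) :
    ∫ p : ℝ × ℝ, F (p.1 + h, p.2) = ∫ p : ℝ × ℝ, F p := by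
  have h1 : MeasurePreserving (fun p : ℝ × ℝ => (p.1 + h, p.2))
      (volume.prod volume) (volume.prod volume) :=
    (measurePreserving_add_right volume h).prod (MeasurePreserving.id volume)
  rw [← Measure.volume_eq_prod] at h1
  have hemb : MeasurableEmbedding (fun p : ℝ × ℝ => (p.1 + h, p.2)) :=
    (MeasurableEquiv.prodCongr (Homeomorph.addRight h).toMeasurableEquiv
      (MeasurableEquiv.refl ℝ)).measurableEmbedding
  exact h1.integral_comp hemb F

lemma integrable_shift {F : ℝ × ℝ → ℍ[ℝ]} (hF : Integrable F) (h : ℝ) :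
    Integrable (fun p : ℝ × ℝ => F (p.1 + h, p.2)) := by
  have h1 : MeasurePreserving (fun p : ℝ × ℝ => (p.1 + h, p.2))
      (volume.prod volume) (volume.prod volume) :=
    (measurePreserving_add_right volume h).prod (MeasurePreserving.id volume)
  rw [← Measure.volume_eq_prod] at h1
  have hemb : MeasurableEmbedding (fun p : ℝ × ℝ => (p.1 + h, p.2)) :=
    (MeasurableEquiv.prodCongr (Homeomorph.addRight h).toMeasurableEquiv
      (MeasurableEquiv.refl ℝ)).measurableEmbedding
  exact (h1.integrable_comp_emb hemb).mpr hF

lemma qexp_qi_add (a b : ℝ) : qexp qi (a + b) = qexp qi a * qexp qi b := by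
  ext <;> simp [qexp, Real.cos_add, Real.sin_add] <;> simp [qi] <;> ring

lemma qexp_zero (μ : ℍ[ℝ]) : qexp μ 0 = 1 := by simp [qexp]

lemma norm_qexp_qi (θ : ℝ) : ‖qexp qi θ‖ = 1 := by
  have h : Quaternion.normSq (qexp qi θ) = 1 := by
    simp [qexp, Quaternion.normSq_def']; simp [qi]
  rw [Quaternion.normSq_eq_norm_mul_self] at h
  nlinarith [norm_nonneg (qexp qi θ)]

lemma norm_qexp_qj (θ : ℝ) : ‖qexp qj θ‖ = 1 := by
  have h : Quaternion.normSq (qexp qj θ) = 1 := by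
    simp [qexp, Quaternion.normSq_def']; simp [qj]
  rw [Quaternion.normSq_eq_norm_mul_self] at h
  nlinarith [norm_nonneg (qexp qj θ)]

lemma continuous_qexp (μ : ℍ[ℝ]) : Continuous (qexp μ) :=
  (Quaternion.continuous_coe.comp Real.continuous_cos).add
    (Real.continuous_sin.smul continuous_const)

lemma norm_integrand (φ : ℝ × ℝ → ℍ[ℝ]) (u v : ℝ) (p : ℝ × ℝ) :
    ‖qexp qi (-(u * p.1)) * φ p * qexp qj (-(v * p.2))‖ = ‖φ p‖ := by
  rw [norm_mul, norm_mul, norm_qexp_qi, norm_qexp_qj]; ring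

lemma integrand_integrable {φ : ℝ × ℝ → ℍ[ℝ]} (hφ : Integrable φ) (u v : ℝ) :
    Integrable (fun p : ℝ × ℝ => qexp qi (-(u * p.1)) * φ p * qexp qj (-(v * p.2))) := by
  have hm : AEStronglyMeasurable
      (fun p : ℝ × ℝ => qexp qi (-(u * p.1)) * φ p * qexp qj (-(v * p.2))) volume := by
    refine (AEStronglyMeasurable.mul ?_ hφ.1).mul ?_
    · exact ((continuous_qexp qi).comp (by fun_prop)).aestronglyMeasurable
    · exact ((continuous_qexp qj).comp (by fun_prop)).aestronglyMeasurable
  refine hφ.norm.mono' hm ?_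
  filter_upwards with p
  rw [norm_integrand]

lemma QFT_sub_norm_le {φ ψ : ℝ × ℝ → ℍ[ℝ]} (hφ : Integrable φ) (hψ : Integrable ψ)
    (u v : ℝ) : ‖QFT_T φ u v - QFT_T ψ u v‖ ≤ ∫ p : ℝ × ℝ, ‖φ p - ψ p‖ := by
  have heq : QFT_T φ u v - QFT_T ψ u v =
      ∫ p : ℝ × ℝ, qexp qi (-(u * p.1)) * (φ p - ψ p) * qexp qj (-(v * p.2)) := by
    rw [QFT_T, QFT_T, ← integral_sub (integrand_integrable hφ u v) (integrand_integrable hψ u v)]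
    congr 1; funext p; rw [mul_sub, sub_mul]
  rw [heq]
  calc ‖∫ p : ℝ × ℝ, qexp qi (-(u * p.1)) * (φ p - ψ p) * qexp qj (-(v * p.2))‖
      ≤ ∫ p : ℝ × ℝ, ‖qexp qi (-(u * p.1)) * (φ p - ψ p) * qexp qj (-(v * p.2))‖ :=
        norm_integral_le_integral_norm _
    _ = ∫ p : ℝ × ℝ, ‖φ p - ψ p‖ :=
        integral_congr_ae (Eventually.of_forall fun p =>
          norm_integrand (fun q => φ q - ψ q) u v p)

lemma integral_const_mul_q (c : ℍ[ℝ]) {F : ℝ × ℝ → ℍ[ℝ]} (hF : Integrable F) :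
    ∫ p : ℝ × ℝ, c * F p = c * ∫ p : ℝ × ℝ, F p :=
  ContinuousLinearMap.integral_comp_comm (ContinuousLinearMap.mul ℝ ℍ[ℝ] c) hF

lemma tendsto_slope_qexp (u : ℝ) :
    Tendsto (fun h : ℝ => h⁻¹ • (qexp qi (u * h) - 1)) (𝓝[≠] (0:ℝ)) (𝓝 (u • qi)) := by
  have hd : HasDerivAt (fun h : ℝ => qexp qi (u * h)) (u • qi) 0 := by
    have hlin : HasDerivAt (fun h : ℝ => u * h) u 0 := by
      simpa using (hasDerivAt_id (0:ℝ)).const_mul u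
    have hcos : HasDerivAt (fun h : ℝ => Real.cos (u * h)) 0 0 := by
      simpa using hlin.cos
    have hsin : HasDerivAt (fun h : ℝ => Real.sin (u * h)) u 0 := by
      simpa using hlin.sin
    have h1 : HasDerivAt (fun h : ℝ => Real.cos (u * h) • (1:ℍ[ℝ]) + Real.sin (u * h) • qi)
        ((0:ℝ) • (1:ℍ[ℝ]) + u • qi) 0 := (hcos.smul_const _).add (hsin.smul_const _)
    have h2 : (fun h : ℝ => Real.cos (u * h) • (1:ℍ[ℝ]) + Real.sin (u * h) • qi)
        = fun h : ℝ => qexp qi (u * h) := by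
      funext h; ext <;> simp [qexp, qi]
    rw [h2] at h1
    simpa using h1
  simpa [slope_fun_def, qexp_zero] using hasDerivAt_iff_tendsto_slope.mp hd

/-- `g` is the partial derivative of `f` with respect to the first variable in the `L¹` norm. -/
def L1PartialDerivS (f g : ℝ × ℝ → ℍ[ℝ]) : Prop :=
  Tendsto (fun h : ℝ => ∫ p : ℝ × ℝ, ‖h⁻¹ • (f (p.1 + h, p.2) - f p) - g p‖)
    (𝓝[≠] (0:ℝ)) (𝓝 0)


/-- The two-sided QFT turns `L¹`-norm differentiation in `s` into left multiplication by `iu`. -/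
theorem qft_two_sided_deriv_s
    (f g : ℝ × ℝ → ℍ[ℝ]) (hf : Integrable f) (hg : Integrable g)
    (hderiv : L1PartialDerivS f g) :
    ∀ u v : ℝ, QFT_T g u v = (u • qi) * QFT_T f u v := by
  intro u v
  set D : ℝ → ℝ × ℝ → ℍ[ℝ] := fun h p => h⁻¹ • (f (p.1 + h, p.2) - f p) with hD
  have hDint : ∀ h : ℝ, Integrable (D h) := by
    intro h
    exact (((integrable_shift hf h).sub hf).smul (h⁻¹ : ℝ)).congr
      (Eventually.of_forall fun p => rfl)
  -- Step 1 : explicit formula for the QFT of the difference quotient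
  have key : ∀ h : ℝ, h ≠ 0 →
      QFT_T (D h) u v = (h⁻¹ • (qexp qi (u * h) - 1)) * QFT_T f u v := by
    intro h hh
    have hfh : Integrable (fun p : ℝ × ℝ => f (p.1 + h, p.2)) := integrable_shift hf h
    have e1 : QFT_T (D h) u v = h⁻¹ •
        ((∫ p : ℝ × ℝ, qexp qi (-(u * p.1)) * f (p.1 + h, p.2) * qexp qj (-(v * p.2))) -
          QFT_T f u v) := by
      rw [QFT_T, QFT_T, ← integral_sub (integrand_integrable hfh u v) (integrand_integrable hf u v),
        ← integral_smul]
      congr 1; funext p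
      simp only [hD, smul_sub, mul_sub, sub_mul, mul_smul_comm, smul_mul_assoc]
    have e2 : (∫ p : ℝ × ℝ, qexp qi (-(u * p.1)) * f (p.1 + h, p.2) * qexp qj (-(v * p.2)))
        = qexp qi (u * h) * QFT_T f u v := by
      have e3 : (∫ p : ℝ × ℝ, qexp qi (-(u * p.1)) * f (p.1 + h, p.2) * qexp qj (-(v * p.2)))
          = ∫ p : ℝ × ℝ, qexp qi (-(u * (p.1 - h))) * f p * qexp qj (-(v * p.2)) := by
        rw [← integral_shift (fun p : ℝ × ℝ =>
          qexp qi (-(u * (p.1 - h))) * f p * qexp qj (-(v * p.2))) h]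
        congr 1; funext p; simp
      rw [e3]
      have e4 : (fun p : ℝ × ℝ => qexp qi (-(u * (p.1 - h))) * f p * qexp qj (-(v * p.2)))
          = fun p : ℝ × ℝ =>
            qexp qi (u * h) * (qexp qi (-(u * p.1)) * f p * qexp qj (-(v * p.2))) := by
        funext p
        have : -(u * (p.1 - h)) = u * h + -(u * p.1) := by ring
        rw [this, qexp_qi_add, mul_assoc, mul_assoc, mul_assoc]
      rw [e4, integral_const_mul_q _ (integrand_integrable hf u v), QFT_T]
    rw [e1, e2, smul_mul_assoc, sub_mul, one_mul]
  -- Step 2 : QFT of the difference quotient tends to QFT of g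
  have hto_g : Tendsto (fun h : ℝ => QFT_T (D h) u v) (𝓝[≠] (0:ℝ))
      (𝓝 (QFT_T g u v)) := by
    rw [tendsto_iff_norm_sub_tendsto_zero]
    refine squeeze_zero (fun h => norm_nonneg _)
      (fun h => QFT_sub_norm_le (hDint h) hg u v) hderiv
  -- Step 3 : QFT of the difference quotient tends to (u • qi) * QFT f
  have hto_f : Tendsto (fun h : ℝ => QFT_T (D h) u v) (𝓝[≠] (0:ℝ))
      (𝓝 ((u • qi) * QFT_T f u v)) := by
    have h1 : Tendsto (fun h : ℝ => (h⁻¹ • (qexp qi (u * h) - 1)) * QFT_T f u v)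
        (𝓝[≠] (0:ℝ)) (𝓝 ((u • qi) * QFT_T f u v)) :=
      (tendsto_slope_qexp u).mul tendsto_const_nhds
    refine h1.congr' ?_
    filter_upwards [self_mem_nhdsWithin] with h hh
    exact (key h hh).symm
  exact tendsto_nhds_unique hto_g hto_f
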